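/- In the group G_k = ⟨g, h ∣ (h⁻¹g)^k⟩ with k ≥ 2, the right multiplication action of G_k on the set of (g,h)-weak Sierpiński subsets is free and has exactly k−1 orbits. -/

import Mathlib

def sierpRels (k : ℕ) : Set (FreeGroup Bool) :=
  {((FreeGroup.of false)⁻¹ * FreeGroup.of true) ^ k}

/-- The group G_k = ⟨g, h ∣ (h⁻¹g)^k⟩. -/
abbrev Gk (k : ℕ) := PresentedGroup (sierpRels k)

/-- The set of (g,h)-weak Sierpiński subsets of G_k. -/
def wSSets (k : ℕ) : Set (Set (Gk k)) :=
  {E | ∃ a b, a ∈ E ∧ b ∈ E ∧ a ≠ b ∧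
    (PresentedGroup.of true * ·) '' E = E \ {a} ∧
    (PresentedGroup.of false * ·) '' E = E \ {b}}

namespace SierpAux

variable {k : ℕ}

abbrev Blk (k : ℕ) := ℤ × ZMod k

def InvT : List (Blk k) → Prop
  | [] => True
  | (m, c) :: rest => m ≠ 0 ∧ (rest ≠ [] → c ≠ 0) ∧ InvT rest

def Inv : List (Blk k) → Prop
  | [] => True
  | (m, c) :: rest => (m = 0 → c ≠ 0) ∧ (rest ≠ [] → c ≠ 0) ∧ InvT rest

lemma invT_imp_inv : ∀ {l : List (Blk k)}, InvT l → Inv l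
  | [], _ => trivial
  | (_, _) :: _, h => ⟨fun h0 => absurd h0 h.1, h.2.1, h.2.2⟩

def gpow (a : ℤ) : List (Blk k) → List (Blk k)
  | [] => if a = 0 then [] else [(a, 0)]
  | (m, c) :: rest =>
      if a + m = 0 then (if c = 0 then rest else (0, c) :: rest) else (a + m, c) :: rest

def tpow (b : ZMod k) : List (Blk k) → List (Blk k)
  | [] => if b = 0 then [] else [(0, b)]
  | (m, c) :: rest =>
      if m = 0 then (if b + c = 0 then rest else (0, b + c) :: rest)
      else if b = 0 then (m, c) :: rest else (0, b) :: (m, c) :: rest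

lemma gpow_nil (a : ℤ) : gpow a ([] : List (Blk k)) = if a = 0 then [] else [(a, 0)] := rfl

lemma gpow_cons (a m : ℤ) (c : ZMod k) (rest : List (Blk k)) :
    gpow a ((m, c) :: rest) =
      if a + m = 0 then (if c = 0 then rest else (0, c) :: rest) else (a + m, c) :: rest := rfl

lemma tpow_nil (b : ZMod k) : tpow b ([] : List (Blk k)) = if b = 0 then [] else [(0, b)] := rfl

lemma tpow_cons (b : ZMod k) (m : ℤ) (c : ZMod k) (rest : List (Blk k)) :
    tpow b ((m, c) :: rest) =
      if m = 0 then (if b + c = 0 then rest else (0, b + c) :: rest)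
      else if b = 0 then (m, c) :: rest else (0, b) :: (m, c) :: rest := rfl

lemma inv_nil : Inv ([] : List (Blk k)) := trivial

lemma inv_cons (m : ℤ) (c : ZMod k) (rest : List (Blk k)) :
    Inv ((m, c) :: rest) ↔ (m = 0 → c ≠ 0) ∧ (rest ≠ [] → c ≠ 0) ∧ InvT rest := Iff.rfl

lemma invT_cons (m : ℤ) (c : ZMod k) (rest : List (Blk k)) :
    InvT ((m, c) :: rest) ↔ m ≠ 0 ∧ (rest ≠ [] → c ≠ 0) ∧ InvT rest := Iff.rfl

lemma inv_gpow (a : ℤ) : ∀ {l : List (Blk k)}, Inv l → Inv (gpow a l)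
  | [], _ => by
      rw [gpow_nil]
      split_ifs with h1
      · trivial
      · exact ⟨fun h0 => absurd h0 h1, by simp, trivial⟩
  | (m, c) :: rest, h => by
      rw [gpow_cons]
      split_ifs with h1 h2
      · exact invT_imp_inv h.2.2
      · exact ⟨fun _ => h2, h.2.1, h.2.2⟩
      · exact ⟨fun h0 => absurd h0 h1, h.2.1, h.2.2⟩

lemma inv_tpow (b : ZMod k) : ∀ {l : List (Blk k)}, Inv l → Inv (tpow b l)
  | [], _ => by
      rw [tpow_nil]
      split_ifs with h1
      · trivial
      · exact ⟨fun _ => h1, by simp, trivial⟩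
  | (m, c) :: rest, h => by
      rw [tpow_cons]
      split_ifs with h1 h2 h3
      · exact invT_imp_inv h.2.2
      · exact ⟨fun _ => h2, fun _ => h2, h.2.2⟩
      · exact h
      · exact ⟨fun _ => h3, fun _ => h3, h1, h.2.1, h.2.2⟩

lemma gpow_zero : ∀ {l : List (Blk k)}, Inv l → gpow 0 l = l
  | [], _ => by rw [gpow_nil, if_pos rfl]
  | (m, c) :: rest, h => by
      rw [gpow_cons, zero_add]
      split_ifs with h1 h2
      · exact absurd h2 (h.1 h1)
      · subst h1; rfl
      · rfl

lemma tpow_zero : ∀ {l : List (Blk k)}, Inv l → tpow 0 l = l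
  | [], _ => by rw [tpow_nil, if_pos rfl]
  | (m, c) :: rest, h => by
      rw [tpow_cons, zero_add]
      by_cases h1 : m = 0
      · rw [if_pos h1, if_neg (h.1 h1), h1]
      · rw [if_neg h1, if_pos rfl]

lemma gpow_gpow (a b : ℤ) : ∀ {l : List (Blk k)}, Inv l → gpow a (gpow b l) = gpow (a + b) l
  | [], _ => by
      rw [gpow_nil]
      by_cases hb : b = 0
      · subst hb; rw [if_pos rfl, add_zero]
      · rw [if_neg hb, gpow_cons, if_pos rfl, gpow_nil (a + b)]
  | (m, c) :: rest, h => by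
      rw [gpow_cons]
      by_cases h1 : b + m = 0
      · rw [if_pos h1]
        by_cases h2 : c = 0
        · rw [if_pos h2]
          have hr : rest = [] := by
            by_contra hne; exact h.2.1 hne h2
          subst hr
          rw [gpow_nil, gpow_cons (a + b) m c []]
          by_cases ha : a = 0
          · rw [if_pos ha, if_pos (show a + b + m = 0 by omega), if_pos h2]
          · rw [if_neg ha, if_neg (show ¬ a + b + m = 0 by omega)]
            have : a + b + m = a := by omega
            rw [this, h2]
        · rw [if_neg h2, gpow_cons a 0 c rest, gpow_cons (a + b) m c rest]
          by_cases ha : a = 0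
          · rw [if_pos (show a + 0 = 0 by omega), if_pos (show a + b + m = 0 by omega),
              if_neg h2]
          · rw [if_neg (show ¬ a + 0 = 0 by omega), if_neg (show ¬ a + b + m = 0 by omega)]
            have : a + 0 = a + b + m := by omega
            rw [this]
      · rw [if_neg h1, gpow_cons a (b + m) c rest, gpow_cons (a + b) m c rest]
        by_cases h2 : a + b + m = 0
        · rw [if_pos (show a + (b + m) = 0 by omega), if_pos h2]
        · rw [if_neg (show ¬ a + (b + m) = 0 by omega), if_neg h2, ← add_assoc]

lemma tpow_tpow (a b : ZMod k) : ∀ {l : List (Blk k)}, Inv l → tpow a (tpow b l) = tpow (a + b) l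
  | [], _ => by
      rw [tpow_nil]
      by_cases hb : b = 0
      · subst hb; rw [if_pos rfl, add_zero]
      · rw [if_neg hb, tpow_cons, tpow_nil (a + b), if_pos rfl]
  | (m, c) :: rest, h => by
      rw [tpow_cons]
      by_cases h1 : m = 0
      · rw [if_pos h1]
        by_cases h2 : b + c = 0
        · rw [if_pos h2, tpow_cons, if_pos h1]
          have hcb : a + b + c = a := by rw [add_assoc, h2, add_zero]
          by_cases ha : a = 0
          · rw [if_pos (show a + b + c = 0 by rw [hcb, ha])]
            subst ha
            exact tpow_zero (invT_imp_inv h.2.2)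
          · rw [if_neg (show ¬ a + b + c = 0 by rw [hcb]; exact ha), hcb]
            rcases rest with _ | ⟨⟨m', c'⟩, rest'⟩
            · rw [tpow_nil, if_neg ha]
            · rw [tpow_cons, if_neg h.2.2.1, if_neg ha]
        · rw [if_neg h2, tpow_cons, if_pos rfl, tpow_cons, if_pos h1, ← add_assoc]
      · rw [if_neg h1]
        by_cases hb : b = 0
        · subst hb; rw [if_pos rfl, add_zero]
        · rw [if_neg hb, tpow_cons, if_pos rfl, tpow_cons, if_neg h1]


/-! ### The permutation model -/

def Wd (k : ℕ) := {l : List (Blk k) // Inv l}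

def σg : Equiv.Perm (Wd k) where
  toFun w := ⟨gpow 1 w.1, inv_gpow 1 w.2⟩
  invFun w := ⟨gpow (-1) w.1, inv_gpow (-1) w.2⟩
  left_inv w := Subtype.ext (by
    simp only [gpow_gpow (-1) 1 w.2]
    norm_num
    exact gpow_zero w.2)
  right_inv w := Subtype.ext (by
    simp only [gpow_gpow 1 (-1) w.2]
    norm_num
    exact gpow_zero w.2)

def σt : Equiv.Perm (Wd k) where
  toFun w := ⟨tpow 1 w.1, inv_tpow 1 w.2⟩
  invFun w := ⟨tpow (-1) w.1, inv_tpow (-1) w.2⟩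
  left_inv w := Subtype.ext (by
    simp only [tpow_tpow (-1) 1 w.2]
    norm_num
    exact tpow_zero w.2)
  right_inv w := Subtype.ext (by
    simp only [tpow_tpow 1 (-1) w.2]
    norm_num
    exact tpow_zero w.2)

lemma σg_apply (w : Wd k) : (σg w).1 = gpow 1 w.1 := rfl
lemma σg_inv_apply (w : Wd k) : (σg⁻¹ w).1 = gpow (-1) w.1 := rfl
lemma σt_apply (w : Wd k) : (σt w).1 = tpow 1 w.1 := rfl
lemma σt_inv_apply (w : Wd k) : (σt⁻¹ w).1 = tpow (-1) w.1 := rfl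

lemma σt_pow_apply (n : ℕ) (w : Wd k) : ((σt ^ n) w).1 = tpow (n : ZMod k) w.1 := by
  induction n with
  | zero =>
      simp only [pow_zero, Nat.cast_zero]
      rw [tpow_zero w.2]
      rfl
  | succ n ih =>
      rw [pow_succ', Equiv.Perm.mul_apply, σt_apply, ih, tpow_tpow 1 (n : ZMod k) w.2]
      push_cast
      ring_nf

lemma σt_pow_k : (σt : Equiv.Perm (Wd k)) ^ k = 1 := by
  ext w
  have h1 := σt_pow_apply (k := k) k w
  rw [ZMod.natCast_self, tpow_zero w.2] at h1
  show ((σt ^ k) w) = w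
  exact Subtype.ext h1

/-! ### The group `Gk` and its action on words -/

variable (k) in
def g0 : Gk k := PresentedGroup.of true

variable (k) in
def h0 : Gk k := PresentedGroup.of false

variable (k) in
def t0 : Gk k := (h0 k)⁻¹ * g0 k

lemma t0_pow_k : (t0 k) ^ k = 1 := by
  have h1 : t0 k ^ k =
      PresentedGroup.mk (sierpRels k) ((((FreeGroup.of false)⁻¹) * FreeGroup.of true) ^ k) := by
    rw [map_pow, map_mul, map_inv]
    rfl
  rw [h1]
  exact (QuotientGroup.eq_one_iff _).2
    (Subgroup.subset_normalClosure (by exact rfl))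

lemma h0_mul_t0 : h0 k * t0 k = g0 k := by
  rw [t0, mul_inv_cancel_left]

def fmap : Bool → Equiv.Perm (Wd k) := fun b => if b then σg else σg * σt⁻¹

lemma fmap_rels : ∀ r ∈ sierpRels k, FreeGroup.lift (fmap (k := k)) r = 1 := by
  intro r hr
  have hr' : r = (((FreeGroup.of false)⁻¹) * FreeGroup.of true) ^ k := hr
  subst hr'
  rw [map_pow, map_mul, map_inv, FreeGroup.lift_apply_of, FreeGroup.lift_apply_of]
  have : ((fmap false : Equiv.Perm (Wd k)))⁻¹ * fmap true = σt := by
    simp only [fmap, if_true, if_false, Bool.false_eq_true]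
    rw [mul_inv_rev, inv_inv, inv_mul_cancel_right]
  rw [this, σt_pow_k]

variable (k) in
def π : Gk k →* Equiv.Perm (Wd k) := PresentedGroup.toGroup fmap_rels

lemma π_g : π k (g0 k) = σg := by
  rw [g0]
  exact PresentedGroup.toGroup.of fmap_rels

lemma π_h : π k (h0 k) = σg * σt⁻¹ := by
  rw [h0]
  exact PresentedGroup.toGroup.of fmap_rels

lemma π_t : π k (t0 k) = σt := by
  rw [t0, map_mul, map_inv, π_g, π_h, mul_inv_rev, inv_inv, inv_mul_cancel_right]

variable (k) in
def emptyW : Wd k := ⟨[], trivial⟩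

variable (k) in
def Φ (v : Gk k) : Wd k := (π k v) (emptyW k)

lemma Φ_mul (x v : Gk k) : Φ k (x * v) = (π k x) (Φ k v) := by
  rw [Φ, map_mul]
  rfl

/-! ### Evaluation back into the group: injectivity of `Φ` -/

variable (k) in
def eval (l : List (Blk k)) : Gk k :=
  (l.map (fun p => g0 k ^ p.1 * t0 k ^ (p.2.val))).prod

lemma eval_nil : eval k ([] : List (Blk k)) = 1 := rfl

lemma eval_cons (m : ℤ) (c : ZMod k) (rest : List (Blk k)) :
    eval k ((m, c) :: rest) = g0 k ^ m * t0 k ^ c.val * eval k rest := by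
  rw [eval, List.map_cons, List.prod_cons]
  rfl

lemma t0_pow_mod (n : ℕ) : t0 k ^ n = t0 k ^ (n % k) := by
  conv_lhs => rw [← Nat.div_add_mod n k]
  rw [pow_add, pow_mul, t0_pow_k, one_pow, one_mul]

lemma t0_pow_val_add (hk : 2 ≤ k) (c d : ZMod k) :
    t0 k ^ (c + d).val = t0 k ^ c.val * t0 k ^ d.val := by
  haveI : NeZero k := ⟨by omega⟩
  rw [ZMod.val_add, ← t0_pow_mod, pow_add]

lemma eval_gpow (hk : 2 ≤ k) (a : ℤ) :
    ∀ {l : List (Blk k)}, Inv l → eval k (gpow a l) = g0 k ^ a * eval k l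
  | [], _ => by
      haveI : NeZero k := ⟨by omega⟩
      rw [gpow_nil]
      by_cases ha : a = 0
      · rw [if_pos ha, ha, zpow_zero, one_mul]
      · rw [if_neg ha, eval_cons, eval_nil, ZMod.val_zero, pow_zero, mul_one, mul_one]
  | (m, c) :: rest, h => by
      haveI : NeZero k := ⟨by omega⟩
      rw [gpow_cons, eval_cons]
      by_cases h1 : a + m = 0
      · rw [if_pos h1]
        by_cases h2 : c = 0
        · rw [if_pos h2, h2, ZMod.val_zero, pow_zero, mul_one, ← mul_assoc, ← zpow_add, h1,
            zpow_zero, one_mul]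
        · rw [if_neg h2, eval_cons, zpow_zero, one_mul, ← mul_assoc, ← mul_assoc, ← zpow_add, h1,
            zpow_zero, one_mul]
      · rw [if_neg h1, eval_cons, ← mul_assoc, ← mul_assoc, ← zpow_add]

lemma eval_tpow (hk : 2 ≤ k) (b : ZMod k) :
    ∀ {l : List (Blk k)}, Inv l → eval k (tpow b l) = t0 k ^ b.val * eval k l
  | [], _ => by
      haveI : NeZero k := ⟨by omega⟩
      rw [tpow_nil]
      by_cases hb : b = 0
      · rw [if_pos hb, hb, ZMod.val_zero, pow_zero, one_mul]
      · rw [if_neg hb, eval_cons, eval_nil, zpow_zero, one_mul, mul_one]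
  | (m, c) :: rest, h => by
      haveI : NeZero k := ⟨by omega⟩
      rw [tpow_cons, eval_cons]
      by_cases h1 : m = 0
      · rw [if_pos h1, h1, zpow_zero, one_mul]
        by_cases h2 : b + c = 0
        · rw [if_pos h2, ← mul_assoc, ← t0_pow_val_add hk, h2, ZMod.val_zero, pow_zero, one_mul]
        · rw [if_neg h2, eval_cons, zpow_zero, one_mul, ← mul_assoc, ← t0_pow_val_add hk]
      · rw [if_neg h1]
        by_cases hb : b = 0
        · rw [if_pos hb, hb, ZMod.val_zero, pow_zero, one_mul, eval_cons]
        · rw [if_neg hb, eval_cons, eval_cons, zpow_zero, one_mul, mul_assoc]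

lemma closure_gh : Subgroup.closure ({g0 k, h0 k} : Set (Gk k)) = ⊤ := by
  have h1 : (Set.range (PresentedGroup.of : Bool → Gk k)) = {g0 k, h0 k} := by
    ext x
    simp only [Set.mem_range, Set.mem_insert_iff, Set.mem_singleton_iff]
    constructor
    · rintro ⟨b, rfl⟩
      cases b
      · right; rfl
      · left; rfl
    · rintro (rfl | rfl)
      · exact ⟨true, rfl⟩
      · exact ⟨false, rfl⟩
  rw [← h1]
  exact PresentedGroup.closure_range_of _

lemma eval_equivariant (hk : 2 ≤ k) (v : Gk k) :
    ∀ w : Wd k, eval k ((π k v) w).1 = v * eval k w.1 := by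
  haveI : NeZero k := ⟨by omega⟩
  have hv : v ∈ Subgroup.closure ({g0 k, h0 k} : Set (Gk k)) := by
    rw [closure_gh]; trivial
  induction hv using Subgroup.closure_induction with
  | mem x hx =>
      rcases hx with rfl | rfl
      · intro w
        rw [π_g, σg_apply, eval_gpow hk 1 w.2, zpow_one]
      · intro w
        rw [π_h]
        have : ((σg * σt⁻¹ : Equiv.Perm (Wd k)) w).1 = gpow 1 (tpow (-1) w.1) := rfl
        rw [this, eval_gpow hk 1 (inv_tpow (-1) w.2), eval_tpow hk (-1) w.2, zpow_one]
        have hneg : ((-1 : ZMod k)).val = k - 1 := by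
          have h2 : (-1 : ZMod k) = ((k - 1 : ℕ) : ZMod k) := by
            rw [Nat.cast_sub (by omega : 1 ≤ k), ZMod.natCast_self]
            ring
          rw [h2, ZMod.val_cast_of_lt (by omega)]
        rw [hneg, ← mul_assoc]
        congr 1
        have hg : g0 k = h0 k * t0 k := (h0_mul_t0).symm
        rw [hg, mul_assoc, ← pow_succ', show k - 1 + 1 = k from by omega, t0_pow_k, mul_one]
  | one =>
      intro w
      rw [map_one]
      simp only [Equiv.Perm.coe_one, id_eq, one_mul]
  | mul x y hx hy ihx ihy =>
      intro w
      rw [map_mul, Equiv.Perm.mul_apply, ihx, ihy, mul_assoc]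
  | inv x hx ihx =>
      intro w
      have := ihx ((π k x)⁻¹ w)
      rw [map_inv] at *
      rw [← Equiv.Perm.mul_apply (π k x) (π k x)⁻¹ w, mul_inv_cancel, Equiv.Perm.one_apply] at this
      rw [eq_inv_mul_iff_mul_eq, ← this]

lemma eval_Φ (hk : 2 ≤ k) (v : Gk k) : eval k (Φ k v).1 = v := by
  rw [Φ, eval_equivariant hk v (emptyW k)]
  show v * eval k [] = v
  rw [eval_nil, mul_one]

lemma Φ_inj (hk : 2 ≤ k) : Function.Injective (Φ k) := by
  intro v w hvw
  rw [← eval_Φ hk v, ← eval_Φ hk w, hvw]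

/-! ### The membership condition -/

def CondB (j : ℕ) : Option (Blk k) → Prop
  | none => True
  | some (m, c) =>
      if 0 < m then (c.val = 0 ∨ k - j ≤ c.val) else (c.val = 0 ∨ k - j + 1 ≤ c.val)

def Cond (j : ℕ) (l : List (Blk k)) : Prop := CondB j l.getLast?

lemma cond_nil (j : ℕ) : Cond j ([] : List (Blk k)) := trivial

lemma cond_singleton (j : ℕ) (m : ℤ) (c : ZMod k) :
    Cond j [(m, c)] ↔
      if 0 < m then (c.val = 0 ∨ k - j ≤ c.val) else (c.val = 0 ∨ k - j + 1 ≤ c.val) := Iff.rfl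

lemma cond_cons {j : ℕ} (x : Blk k) {l : List (Blk k)} (h : l ≠ []) :
    Cond j (x :: l) ↔ Cond j l := by
  rcases l with _ | ⟨y, l'⟩
  · exact absurd rfl h
  · rw [Cond, Cond, List.getLast?_cons_cons]

section KeyLemmas

lemma cj_val {j : ℕ} (hk : 2 ≤ k) (hj1 : 1 ≤ j) (hj2 : j < k) : ((k - j : ℕ) : ZMod k).val = k - j := by
  haveI : NeZero k := ⟨by omega⟩
  exact ZMod.val_cast_of_lt (by omega)

lemma cj_ne_zero {j : ℕ} (hk : 2 ≤ k) (hj1 : 1 ≤ j) (hj2 : j < k) : ((k - j : ℕ) : ZMod k) ≠ 0 := by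
  haveI : NeZero k := ⟨by omega⟩
  intro heq
  have h1 := cj_val hk hj1 hj2
  rw [heq, ZMod.val_zero] at h1
  omega

lemma eq_cj_iff {j : ℕ} (hk : 2 ≤ k) (hj1 : 1 ≤ j) (hj2 : j < k) (c : ZMod k) : c = ((k - j : ℕ) : ZMod k) ↔ c.val = k - j := by
  haveI : NeZero k := ⟨by omega⟩
  constructor
  · intro h'; rw [h', cj_val hk hj1 hj2]
  · intro h'
    exact ZMod.val_injective k (by rw [cj_val hk hj1 hj2]; exact h')

lemma KL1 {j : ℕ} (hk : 2 ≤ k) (hj1 : 1 ≤ j) (hj2 : j < k) : ∀ {l : List (Blk k)}, Inv l →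
    (Cond j (gpow (-1) l) ↔ (Cond j l ∧ l ≠ [((1 : ℤ), ((k - j : ℕ) : ZMod k))]))
  | [], _ => by
      haveI : NeZero k := ⟨by omega⟩
      rw [gpow_nil, if_neg (by norm_num : ¬(-1 : ℤ) = 0)]
      constructor
      · intro _
        exact ⟨cond_nil j, by simp⟩
      · intro _
        rw [cond_singleton, if_neg (by norm_num : ¬(0:ℤ) < -1)]
        left
        exact ZMod.val_zero
  | (m, c) :: rest, h => by
      haveI : NeZero k := ⟨by omega⟩
      have hvk : c.val < k := ZMod.val_lt c
      have hccj := eq_cj_iff hk hj1 hj2 c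
      have hc0 : c = 0 ↔ c.val = 0 := (ZMod.val_eq_zero c).symm
      rw [gpow_cons]
      by_cases h1 : (-1 : ℤ) + m = 0
      · have hm1 : m = 1 := by omega
        subst hm1
        rw [if_pos h1]
        by_cases h2 : c = 0
        · have hr : rest = [] := by by_contra hne; exact h.2.1 hne h2
          subst hr
          rw [if_pos h2, h2]
          constructor
          · intro _
            refine ⟨?_, ?_⟩
            · rw [cond_singleton, if_pos (by norm_num : (0:ℤ) < 1)]
              left
              exact ZMod.val_zero
            · intro hh
              injection hh with hh1 _
              injection hh1 with _ hh2
              exact cj_ne_zero hk hj1 hj2 hh2.symm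
          · intro _
            exact cond_nil j
        · rw [if_neg h2]
          rcases rest with _ | ⟨y, rest'⟩
          · -- singleton case
            rw [cond_singleton, cond_singleton, if_neg (by norm_num : ¬(0:ℤ) < 0),
              if_pos (by norm_num : (0:ℤ) < 1)]
            have hcv : c.val ≠ 0 := fun hh => h2 (hc0.mpr hh)
            constructor
            · intro hcond
              refine ⟨by omega, ?_⟩
              intro hh
              injection hh with hh1 _
              injection hh1 with _ hh2
              rw [hccj.mp hh2] at hcond
              omega
            · rintro ⟨hcond, hne⟩
              have : c.val ≠ k - j := fun hh => hne (by rw [hccj.mpr hh])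
              omega
          · -- rest nonempty
            have hne : (y :: rest' : List (Blk k)) ≠ [] := by simp
            rw [cond_cons _ hne, cond_cons _ hne]
            constructor
            · intro hp
              exact ⟨hp, by simp⟩
            · exact fun hp => hp.1
      · rw [if_neg h1]
        have hm1 : m ≠ 1 := by omega
        rcases rest with _ | ⟨y, rest'⟩
        · rw [cond_singleton, cond_singleton]
          have hne : [((m : ℤ), c)] ≠ [((1 : ℤ), ((k - j : ℕ) : ZMod k))] := by
            intro hh
            injection hh with hh1 _
            injection hh1 with hh2 _
            exact hm1 hh2
          by_cases hm : 0 < m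
          · rw [if_pos (by omega : (0:ℤ) < -1 + m), if_pos hm]
            exact ⟨fun hcond => ⟨hcond, hne⟩, fun hcond => hcond.1⟩
          · rw [if_neg (by omega : ¬(0:ℤ) < -1 + m), if_neg hm]
            exact ⟨fun hcond => ⟨hcond, hne⟩, fun hcond => hcond.1⟩
        · have hne : (y :: rest' : List (Blk k)) ≠ [] := by simp
          rw [cond_cons _ hne, cond_cons _ hne]
          constructor
          · intro hp
            exact ⟨hp, by simp⟩
          · exact fun hp => hp.1

lemma KL2 {j : ℕ} (hk : 2 ≤ k) (hj1 : 1 ≤ j) (hj2 : j < k) : ∀ {l : List (Blk k)}, Inv l →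
    (Cond j (tpow 1 (gpow (-1) l)) ↔ (Cond j l ∧ l ≠ [((1 : ℤ), (0 : ZMod k))]))
  | [], _ => by
      haveI : NeZero k := ⟨by omega⟩
      haveI : Fact (1 < k) := ⟨by omega⟩
      rw [gpow_nil, if_neg (by norm_num : ¬(-1 : ℤ) = 0), tpow_cons,
        if_neg (by norm_num : ¬(-1 : ℤ) = 0), if_neg (one_ne_zero : (1 : ZMod k) ≠ 0)]
      constructor
      · intro _
        exact ⟨cond_nil j, by simp⟩
      · intro _
        rw [cond_cons _ (by simp : ([((-1 : ℤ), (0 : ZMod k))] : List (Blk k)) ≠ []),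
          cond_singleton, if_neg (by norm_num : ¬(0:ℤ) < -1)]
        left
        exact ZMod.val_zero
  | (m, c) :: rest, h => by
      haveI : NeZero k := ⟨by omega⟩
      haveI : Fact (1 < k) := ⟨by omega⟩
      have h10 : (1 : ZMod k) ≠ 0 := one_ne_zero
      have hvk : c.val < k := ZMod.val_lt c
      have hc0 : c = 0 ↔ c.val = 0 := (ZMod.val_eq_zero c).symm
      rw [gpow_cons]
      by_cases h1 : (-1 : ℤ) + m = 0
      · have hm1 : m = 1 := by omega
        subst hm1
        rw [if_pos h1]
        by_cases h2 : c = 0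
        · have hr : rest = [] := by by_contra hne; exact h.2.1 hne h2
          subst hr
          rw [if_pos h2, h2, tpow_nil, if_neg h10]
          rw [cond_singleton, if_neg (by norm_num : ¬(0:ℤ) < 0), ZMod.val_one]
          constructor
          · intro hcond
            omega
          · rintro ⟨-, hne⟩
            exact absurd rfl hne
        · rw [if_neg h2, tpow_cons, if_pos rfl]
          by_cases h3 : (1 : ZMod k) + c = 0
          · rw [if_pos h3]
            have hcv : c.val = k - 1 := by
              have : c = ((k - 1 : ℕ) : ZMod k) := by
                rw [Nat.cast_sub (by omega : 1 ≤ k), ZMod.natCast_self]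
                linear_combination h3
              rw [this, ZMod.val_cast_of_lt (by omega)]
            rcases rest with _ | ⟨y, rest'⟩
            · constructor
              · intro _
                refine ⟨?_, ?_⟩
                · rw [cond_singleton, if_pos (by norm_num : (0:ℤ) < 1)]
                  right
                  omega
                · intro hh
                  injection hh with hh1 _
                  injection hh1 with _ hh2
                  exact h2 hh2
              · intro _
                exact cond_nil j
            · have hne : (y :: rest' : List (Blk k)) ≠ [] := by simp
              rw [cond_cons _ hne]
              constructor
              · intro hp
                exact ⟨hp, by simp⟩
              · exact fun hp => hp.1
          · rw [if_neg h3]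
            have hcv : c.val ≠ 0 := fun hh => h2 (hc0.mpr hh)
            have hvadd : ((1 : ZMod k) + c).val = 1 + c.val := by
              have hlt : c.val ≠ k - 1 := by
                intro hh
                apply h3
                have : c = ((k - 1 : ℕ) : ZMod k) := by
                  have := ZMod.val_cast_of_lt (show k - 1 < k by omega)
                  exact ZMod.val_injective k (by rw [this, hh])
                rw [this, Nat.cast_sub (by omega : 1 ≤ k), ZMod.natCast_self]
                ring
              rw [ZMod.val_add, ZMod.val_one, Nat.mod_eq_of_lt (by omega)]
            rcases rest with _ | ⟨y, rest'⟩
            · rw [cond_singleton, cond_singleton, if_neg (by norm_num : ¬(0:ℤ) < 0),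
                if_pos (by norm_num : (0:ℤ) < 1)]
              have hadd0 : ((1 : ZMod k) + c).val ≠ 0 := fun hh => h3 ((ZMod.val_eq_zero _).mp hh)
              constructor
              · intro hcond
                refine ⟨by omega, ?_⟩
                intro hh
                injection hh with hh1 _
                injection hh1 with _ hh2
                exact h2 hh2
              · rintro ⟨hcond, -⟩
                omega
            · have hne : (y :: rest' : List (Blk k)) ≠ [] := by simp
              rw [cond_cons _ hne, cond_cons _ hne]
              constructor
              · intro hp
                exact ⟨hp, by simp⟩
              · exact fun hp => hp.1
      · rw [if_neg h1]
        have hm1 : m ≠ 1 := by omega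
        rw [tpow_cons, if_neg (by omega : ¬(-1 + m = 0)), if_neg h10]
        have hne2 : ((-1 + m, c) :: rest : List (Blk k)) ≠ [] := by simp
        rw [cond_cons _ hne2]
        have hnel : ((m, c) :: rest : List (Blk k)) ≠ [((1 : ℤ), (0 : ZMod k))] := by
          intro hh
          injection hh with hh1 _
          injection hh1 with hh2 _
          exact hm1 hh2
        rcases rest with _ | ⟨y, rest'⟩
        · rw [cond_singleton, cond_singleton]
          by_cases hm : 0 < m
          · rw [if_pos (by omega : (0:ℤ) < -1 + m), if_pos hm]
            exact ⟨fun hcond => ⟨hcond, hnel⟩, fun hcond => hcond.1⟩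
          · rw [if_neg (by omega : ¬(0:ℤ) < -1 + m), if_neg hm]
            exact ⟨fun hcond => ⟨hcond, hnel⟩, fun hcond => hcond.1⟩
        · have hne : (y :: rest' : List (Blk k)) ≠ [] := by simp
          rw [cond_cons _ hne, cond_cons _ hne]
          exact ⟨fun hcond => ⟨hcond, hnel⟩, fun hcond => hcond.1⟩

end KeyLemmas

/-! ### Explicit word computations -/

lemma Φ_one : (Φ k 1).1 = [] := by
  rw [Φ, map_one]
  rfl

lemma Φ_g : (Φ k (g0 k)).1 = [((1 : ℤ), (0 : ZMod k))] := by
  rw [Φ, π_g]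
  show gpow 1 [] = _
  rw [gpow_nil, if_neg (one_ne_zero : (1:ℤ) ≠ 0)]

lemma Φ_t_pow (n : ℕ) : (Φ k (t0 k ^ n)).1 =
    if (n : ZMod k) = 0 then [] else [((0 : ℤ), (n : ZMod k))] := by
  rw [Φ, map_pow, π_t]
  show ((σt ^ n) (emptyW k)).1 = _
  rw [σt_pow_apply]
  show tpow _ [] = _
  rw [tpow_nil]

lemma Φ_g_t_pow (n : ℕ) (hn : (n : ZMod k) ≠ 0) :
    (Φ k (g0 k * t0 k ^ n)).1 = [((1 : ℤ), (n : ZMod k))] := by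
  rw [Φ_mul, π_g, σg_apply, Φ_t_pow, if_neg hn]
  rw [gpow_cons, if_neg (by norm_num : ¬(1 : ℤ) + 0 = 0)]
  norm_num

lemma t0_pow_ne_one (hk : 2 ≤ k) {n : ℕ} (h1 : 1 ≤ n) (h2 : n < k) : t0 k ^ n ≠ 1 := by
  haveI : NeZero k := ⟨by omega⟩
  intro hh
  have := congrArg (fun v => (Φ k v).1) hh
  rw [Φ_t_pow, Φ_one, if_neg (by
    intro h0
    have := ZMod.val_cast_of_lt h2
    rw [h0, ZMod.val_zero] at this
    omega)] at this
  exact absurd this (by simp)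

lemma t0_pow_inj (hk : 2 ≤ k) {n m : ℕ} (hn : n < k) (hm : m < k)
    (h : t0 k ^ n = t0 k ^ m) : n = m := by
  haveI : NeZero k := ⟨by omega⟩
  have := congrArg (fun v => (Φ k v).1) h
  rw [Φ_t_pow, Φ_t_pow] at this
  have hval : (n : ZMod k) = (m : ZMod k) := by
    by_cases h1 : (n : ZMod k) = 0 <;> by_cases h2 : (m : ZMod k) = 0
    · rw [h1, h2]
    · rw [if_pos h1, if_neg h2] at this; exact absurd this (by simp)
    · rw [if_neg h1, if_pos h2] at this; exact absurd this (by simp)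
    · rw [if_neg h1, if_neg h2] at this
      injection this with hh _
      injection hh with _ hh2
  have := congrArg ZMod.val hval
  rw [ZMod.val_cast_of_lt hn, ZMod.val_cast_of_lt hm] at this
  exact this

/-! ### The model weak Sierpiński sets -/

variable (k) in
def FF (j : ℕ) : Set (Gk k) := {v | Cond j (Φ k v).1}

variable (k) in
def EE (j : ℕ) : Set (Gk k) := {v | v * g0 k ∈ FF k j}

variable (k) in
def aa (j : ℕ) : Gk k := g0 k * t0 k ^ (k - j) * (g0 k)⁻¹

lemma kj_cast_ne {j : ℕ} (hk : 2 ≤ k) (hj1 : 1 ≤ j) (hj2 : j < k) :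
    ((k - j : ℕ) : ZMod k) ≠ 0 := cj_ne_zero hk hj1 hj2

lemma memF_g {j : ℕ} (hk : 2 ≤ k) (hj1 : 1 ≤ j) (hj2 : j < k) (v : Gk k) :
    (g0 k)⁻¹ * v ∈ FF k j ↔ (v ∈ FF k j ∧ v ≠ g0 k * t0 k ^ (k - j)) := by
  have hΦ : (Φ k ((g0 k)⁻¹ * v)).1 = gpow (-1) (Φ k v).1 := by
    rw [Φ_mul, map_inv, π_g]
    have : ((σg⁻¹ : Equiv.Perm (Wd k)) (Φ k v)).1 = gpow (-1) (Φ k v).1 := rfl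
    exact this
  show Cond j _ ↔ _
  rw [hΦ, KL1 hk hj1 hj2 (Φ k v).2]
  constructor
  · rintro ⟨h1, h2⟩
    refine ⟨h1, ?_⟩
    intro hv
    apply h2
    rw [hv, Φ_g_t_pow (k - j) (kj_cast_ne hk hj1 hj2)]
  · rintro ⟨h1, h2⟩
    refine ⟨h1, ?_⟩
    intro hv
    apply h2
    apply Φ_inj hk
    apply Subtype.ext
    rw [hv, Φ_g_t_pow (k - j) (kj_cast_ne hk hj1 hj2)]

lemma memF_h {j : ℕ} (hk : 2 ≤ k) (hj1 : 1 ≤ j) (hj2 : j < k) (v : Gk k) :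
    (h0 k)⁻¹ * v ∈ FF k j ↔ (v ∈ FF k j ∧ v ≠ g0 k) := by
  have hΦ : (Φ k ((h0 k)⁻¹ * v)).1 = tpow 1 (gpow (-1) (Φ k v).1) := by
    rw [Φ_mul, map_inv, π_h]
    have : (((σg * σt⁻¹)⁻¹ : Equiv.Perm (Wd k)) (Φ k v)).1
        = tpow 1 (gpow (-1) (Φ k v).1) := by
      rw [mul_inv_rev, inv_inv]
      rfl
    exact this
  show Cond j _ ↔ _
  rw [hΦ, KL2 hk hj1 hj2 (Φ k v).2]
  constructor
  · rintro ⟨h1, h2⟩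
    refine ⟨h1, ?_⟩
    intro hv
    apply h2
    rw [hv, Φ_g]
  · rintro ⟨h1, h2⟩
    refine ⟨h1, ?_⟩
    intro hv
    apply h2
    apply Φ_inj hk
    apply Subtype.ext
    rw [hv, Φ_g]

/-! ### Abstract weak Sierpiński sets -/

variable (k) in
def IsWS (E : Set (Gk k)) (a b : Gk k) : Prop :=
  a ∈ E ∧ b ∈ E ∧ a ≠ b ∧ (g0 k * ·) '' E = E \ {a} ∧ (h0 k * ·) '' E = E \ {b}

lemma wSSets_eq : wSSets k = {E | ∃ a b, IsWS k E a b} := rfl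

lemma mem_image_mul_left {x v : Gk k} {E : Set (Gk k)} :
    v ∈ (x * ·) '' E ↔ x⁻¹ * v ∈ E := by
  constructor
  · rintro ⟨e, he, rfl⟩
    simpa only [inv_mul_cancel_left] using he
  · intro h
    exact ⟨x⁻¹ * v, h, by simp [mul_inv_cancel_left]⟩

lemma mem_image_mul_right {x v : Gk k} {E : Set (Gk k)} :
    v ∈ (· * x) '' E ↔ v * x⁻¹ ∈ E := by
  constructor
  · rintro ⟨e, he, rfl⟩
    simpa only [mul_inv_cancel_right] using he
  · intro h
    exact ⟨v * x⁻¹, h, by simp [inv_mul_cancel_right]⟩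

lemma diff_singleton_cancel {E : Set (Gk k)} {a a' : Gk k} (ha : a ∈ E) (ha' : a' ∈ E)
    (h : E \ {a} = E \ {a'}) : a = a' := by
  by_contra hne
  have : a' ∈ E \ {a} := ⟨ha', fun hh => hne (by simpa using hh.symm)⟩
  rw [h] at this
  exact this.2 rfl

lemma ws_translate {E : Set (Gk k)} {a b : Gk k} (h : IsWS k E a b) (x : Gk k) :
    IsWS k ((· * x) '' E) (a * x) (b * x) := by
  obtain ⟨ha, hb, hab, hg, hh⟩ := h
  have hinj : Function.Injective (· * x : Gk k → Gk k) := fun u v huv => by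
    simpa using mul_right_cancel huv
  refine ⟨⟨a, ha, rfl⟩, ⟨b, hb, rfl⟩, fun hh' => hab (mul_right_cancel hh'), ?_, ?_⟩
  · have comm : (g0 k * ·) '' ((· * x) '' E) = (· * x) '' ((g0 k * ·) '' E) := by
      rw [Set.image_image, Set.image_image]
      simp only [mul_assoc]
    rw [comm, hg, Set.image_diff hinj, Set.image_singleton]
  · have comm : (h0 k * ·) '' ((· * x) '' E) = (· * x) '' ((h0 k * ·) '' E) := by
      rw [Set.image_image, Set.image_image]
      simp only [mul_assoc]
    rw [comm, hh, Set.image_diff hinj, Set.image_singleton]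

lemma ws_data_unique {E : Set (Gk k)} {a b a' b' : Gk k} (h : IsWS k E a b)
    (h' : IsWS k E a' b') : a = a' ∧ b = b' := by
  obtain ⟨ha, hb, -, hg, hh⟩ := h
  obtain ⟨ha', hb', -, hg', hh'⟩ := h'
  constructor
  · exact diff_singleton_cancel ha ha' (by rw [← hg, ← hg'])
  · exact diff_singleton_cancel hb hb' (by rw [← hh, ← hh'])

lemma ws_ext {E E' : Set (Gk k)} {a b : Gk k} (hE : IsWS k E a b) (hE' : IsWS k E' a b) :
    E = E' := by
  have key : ∀ X Y : Set (Gk k), IsWS k X a b → IsWS k Y a b → X \ Y = ∅ := by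
    intro X Y hX hY
    obtain ⟨haX, hbX, habX, hgX, hhX⟩ := hX
    obtain ⟨haY, hbY, habY, hgY, hhY⟩ := hY
    by_contra hne
    obtain ⟨d, hd⟩ := Set.nonempty_iff_ne_empty.mpr hne
    set D := X \ Y with hD
    have hgD : ∀ v ∈ D, g0 k * v ∈ D := by
      rintro v ⟨hvX, hvY⟩
      have h1 : g0 k * v ∈ X \ {a} := by
        rw [← hgX]; exact ⟨v, hvX, rfl⟩
      refine ⟨h1.1, ?_⟩
      intro hgvY
      have h2 : g0 k * v ∈ Y \ {a} := ⟨hgvY, h1.2⟩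
      rw [← hgY] at h2
      obtain ⟨e, heY, hee⟩ := h2
      have : e = v := mul_left_cancel hee
      exact hvY (this ▸ heY)
    have hhD : ∀ v ∈ D, h0 k * v ∈ D := by
      rintro v ⟨hvX, hvY⟩
      have h1 : h0 k * v ∈ X \ {b} := by
        rw [← hhX]; exact ⟨v, hvX, rfl⟩
      refine ⟨h1.1, ?_⟩
      intro hgvY
      have h2 : h0 k * v ∈ Y \ {b} := ⟨hgvY, h1.2⟩
      rw [← hhY] at h2
      obtain ⟨e, heY, hee⟩ := h2
      have : e = v := mul_left_cancel hee
      exact hvY (this ▸ heY)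
    have hgiD : ∀ v ∈ D, (g0 k)⁻¹ * v ∈ D := by
      rintro v ⟨hvX, hvY⟩
      have hva : v ≠ a := fun hh => hvY (hh ▸ haY)
      have h1 : v ∈ X \ {a} := ⟨hvX, hva⟩
      rw [← hgX] at h1
      obtain ⟨e, heX, hee⟩ := h1
      have he : e = (g0 k)⁻¹ * v := by rw [← hee, inv_mul_cancel_left]
      refine ⟨he ▸ heX, ?_⟩
      intro hY2
      have : v ∈ (g0 k * ·) '' Y := ⟨(g0 k)⁻¹ * v, hY2, by simp [mul_inv_cancel_left]⟩
      rw [hgY] at this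
      exact hvY this.1
    have hhiD : ∀ v ∈ D, (h0 k)⁻¹ * v ∈ D := by
      rintro v ⟨hvX, hvY⟩
      have hvb : v ≠ b := fun hh => hvY (hh ▸ hbY)
      have h1 : v ∈ X \ {b} := ⟨hvX, hvb⟩
      rw [← hhX] at h1
      obtain ⟨e, heX, hee⟩ := h1
      have he : e = (h0 k)⁻¹ * v := by rw [← hee, inv_mul_cancel_left]
      refine ⟨he ▸ heX, ?_⟩
      intro hY2
      have : v ∈ (h0 k * ·) '' Y := ⟨(h0 k)⁻¹ * v, hY2, by simp [mul_inv_cancel_left]⟩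
      rw [hhY] at this
      exact hvY this.1
    have hP : ∀ v : Gk k, (v * ·) '' D = D := by
      intro v
      have hv : v ∈ Subgroup.closure ({g0 k, h0 k} : Set (Gk k)) := by
        rw [closure_gh]; trivial
      induction hv using Subgroup.closure_induction with
      | mem x hx =>
          rcases hx with rfl | rfl
          · ext u
            rw [mem_image_mul_left]
            constructor
            · intro hu
              have := hgD _ hu
              rwa [mul_inv_cancel_left] at this
            · intro hu
              exact hgiD _ hu
          · ext u
            rw [mem_image_mul_left]
            constructor
            · intro hu
              have := hhD _ hu
              rwa [mul_inv_cancel_left] at this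
            · intro hu
              exact hhiD _ hu
      | one => simp
      | mul x y hx hy ihx ihy =>
          have hcomp : ((x * y) * ·) '' D = (x * ·) '' ((y * ·) '' D) := by
            rw [← Set.image_comp]
            congr 1
            funext u
            simp [Function.comp, mul_assoc]
          rw [hcomp, ihy, ihx]
      | inv x hx ihx =>
          have h1 : (x⁻¹ * ·) '' D = (x⁻¹ * ·) '' ((x * ·) '' D) := by rw [ihx]
          rw [h1, ← Set.image_comp]
          have hfun : ((x⁻¹ * ·) ∘ (x * ·)) = id := funext fun u => by simp
          rw [hfun, Set.image_id]
    have haD : a ∈ D := by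
      rw [← hP (a * d⁻¹)]
      exact ⟨d, hd, by simp [mul_assoc]⟩
    exact haD.2 haY
  have h1 := key E E' hE hE'
  have h2 := key E' E hE' hE
  rw [Set.diff_eq_empty] at h1 h2
  exact le_antisymm h1 h2

lemma ws_invariant {E : Set (Gk k)} {a b : Gk k} (hk : 2 ≤ k) (h : IsWS k E a b) :
    ∃ j, 1 ≤ j ∧ j < k ∧ a = g0 k * t0 k ^ (k - j) * (g0 k)⁻¹ * b := by
  obtain ⟨ha, hb, hab, hg, hh⟩ := h
  -- h0⁻¹ * b ∉ E
  have hnb : (h0 k)⁻¹ * b ∉ E := by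
    intro hmem
    have : b ∈ (h0 k * ·) '' E := ⟨(h0 k)⁻¹ * b, hmem, by simp [mul_inv_cancel_left]⟩
    rw [hh] at this
    exact this.2 rfl
  -- step
  have step : ∀ x ∈ E, h0 k * x ≠ a → (t0 k)⁻¹ * x ∈ E := by
    intro x hx hxa
    have h1 : h0 k * x ∈ E \ {b} := by
      rw [← hh]; exact ⟨x, hx, rfl⟩
    have h2 : h0 k * x ∈ E \ {a} := ⟨h1.1, hxa⟩
    rw [← hg] at h2
    obtain ⟨e, he, hee⟩ := h2
    have : e = (g0 k)⁻¹ * (h0 k * x) := by rw [← hee, inv_mul_cancel_left]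
    have ht : (t0 k)⁻¹ * x = (g0 k)⁻¹ * (h0 k * x) := by
      rw [t0]
      group
    rw [ht, ← this]
    exact he
  -- e0 ∈ E
  have he0 : (g0 k)⁻¹ * b ∈ E := by
    have h1 : b ∈ E \ {a} := ⟨hb, fun hh' => hab (by simpa using hh'.symm)⟩
    rw [← hg] at h1
    obtain ⟨e, he, hee⟩ := h1
    have : e = (g0 k)⁻¹ * b := by rw [← hee, inv_mul_cancel_left]
    exact this ▸ he
  -- main chain
  have main : ∃ i, i ≤ k - 2 ∧ h0 k * (((t0 k)⁻¹) ^ i * ((g0 k)⁻¹ * b)) = a := by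
    by_contra hno
    push_neg at hno
    have chain : ∀ i, i ≤ k - 1 → ((t0 k)⁻¹) ^ i * ((g0 k)⁻¹ * b) ∈ E := by
      intro i
      induction i with
      | zero => intro _; simpa using he0
      | succ n ih =>
          intro hn
          have hn' : n ≤ k - 1 := by omega
          have hmem := ih hn'
          have hne := hno n (by omega)
          have := step _ hmem hne
          rw [← mul_assoc, ← pow_succ'] at this
          rwa [inv_pow] at this ⊢
    have hlast := chain (k - 1) le_rfl
    have hpow : ((t0 k)⁻¹) ^ (k - 1) = t0 k := by
      rw [inv_pow, inv_eq_iff_mul_eq_one, ← pow_succ, show k - 1 + 1 = k by omega, t0_pow_k]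
    rw [hpow] at hlast
    have : (h0 k)⁻¹ * b ∈ E := by
      have ht : t0 k * ((g0 k)⁻¹ * b) = (h0 k)⁻¹ * b := by
        rw [t0]
        group
      rwa [ht] at hlast
    exact hnb this
  obtain ⟨i, hi, hieq⟩ := main
  refine ⟨i + 1, by omega, by omega, ?_⟩
  have hstep : g0 k * t0 k ^ (k - (i + 1)) = h0 k * ((t0 k)⁻¹) ^ i := by
    have hcancel : g0 k * t0 k ^ (k - (i + 1)) * t0 k ^ (i + 1)
        = h0 k * ((t0 k)⁻¹) ^ i * t0 k ^ (i + 1) := by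
      rw [mul_assoc, ← pow_add, show k - (i + 1) + (i + 1) = k by omega, t0_pow_k, mul_one]
      rw [mul_assoc, inv_pow, pow_succ']
      rw [← mul_assoc ((t0 k ^ i)⁻¹) (t0 k) (t0 k ^ i)]
      have : (t0 k ^ i)⁻¹ * t0 k * t0 k ^ i = t0 k := by group
      rw [this, ← h0_mul_t0]
    exact mul_right_cancel hcancel
  rw [hstep, mul_assoc, mul_assoc]
  rw [← hieq]

/-! ### The model sets are weak Sierpiński sets -/

lemma aa_mul_g (j : ℕ) : aa k j * g0 k = g0 k * t0 k ^ (k - j) := by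
  rw [aa, inv_mul_cancel_right]

lemma ws_EE {j : ℕ} (hk : 2 ≤ k) (hj1 : 1 ≤ j) (hj2 : j < k) :
    IsWS k (EE k j) (aa k j) 1 := by
  haveI : NeZero k := ⟨by omega⟩
  have haF : g0 k * t0 k ^ (k - j) ∈ FF k j := by
    show Cond j _
    rw [Φ_g_t_pow (k - j) (kj_cast_ne hk hj1 hj2), cond_singleton,
      if_pos (by norm_num : (0:ℤ) < 1)]
    right
    rw [cj_val hk hj1 hj2]
  have hbF : g0 k ∈ FF k j := by
    show Cond j (Φ k (g0 k)).1
    rw [Φ_g, cond_singleton, if_pos (by norm_num : (0:ℤ) < 1)]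
    left
    exact ZMod.val_zero
  refine ⟨?_, ?_, ?_, ?_, ?_⟩
  · show aa k j * g0 k ∈ FF k j
    rw [aa_mul_g]
    exact haF
  · show 1 * g0 k ∈ FF k j
    rw [one_mul]
    exact hbF
  · intro hh
    have h1 : g0 k * t0 k ^ (k - j) = g0 k := by
      have := congrArg (· * g0 k) hh
      simpa [aa_mul_g, one_mul] using this
    have h2 : t0 k ^ (k - j) = 1 := by
      have := mul_left_cancel (h1.trans (mul_one (g0 k)).symm)
      exact this
    exact t0_pow_ne_one hk (by omega) (by omega) h2
  · ext v
    show v ∈ (g0 k * ·) '' EE k j ↔ _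
    rw [mem_image_mul_left]
    show (g0 k)⁻¹ * v * g0 k ∈ FF k j ↔ _
    rw [mul_assoc, memF_g hk hj1 hj2]
    constructor
    · rintro ⟨h1, h2⟩
      refine ⟨h1, ?_⟩
      intro hv
      apply h2
      rw [Set.mem_singleton_iff] at hv
      rw [hv, aa_mul_g]
    · rintro ⟨h1, h2⟩
      refine ⟨h1, ?_⟩
      intro hv
      apply h2
      rw [Set.mem_singleton_iff]
      have : v * g0 k = aa k j * g0 k := by rw [hv, aa_mul_g]
      exact mul_right_cancel this
  · ext v
    show v ∈ (h0 k * ·) '' EE k j ↔ _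
    rw [mem_image_mul_left]
    show (h0 k)⁻¹ * v * g0 k ∈ FF k j ↔ _
    rw [mul_assoc, memF_h hk hj1 hj2]
    constructor
    · rintro ⟨h1, h2⟩
      refine ⟨h1, ?_⟩
      intro hv
      apply h2
      rw [Set.mem_singleton_iff] at hv
      rw [hv, one_mul]
    · rintro ⟨h1, h2⟩
      refine ⟨h1, ?_⟩
      intro hv
      apply h2
      rw [Set.mem_singleton_iff]
      have : v * g0 k = 1 * g0 k := by rw [hv, one_mul]
      exact mul_right_cancel this

lemma EE_inj (hk : 2 ≤ k) {i j : ℕ} (hi1 : 1 ≤ i) (hi2 : i < k) (hj1 : 1 ≤ j) (hj2 : j < k)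
    (h : EE k i = EE k j) : i = j := by
  have h1 := ws_EE hk hi1 hi2
  have h2 := ws_EE hk hj1 hj2
  rw [h] at h1
  have := (ws_data_unique h1 h2).1
  rw [aa, aa] at this
  have h3 : g0 k * t0 k ^ (k - i) = g0 k * t0 k ^ (k - j) := mul_right_cancel this
  have h4 : t0 k ^ (k - i) = t0 k ^ (k - j) := mul_left_cancel h3
  have := t0_pow_inj hk (by omega) (by omega) h4
  omega

end SierpAux

open SierpAux in
/-- In G_k (k ≥ 2), the right multiplication action of G_k on the set of
(g,h)-weak Sierpiński subsets is free and has exactly k − 1 orbits. -/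
theorem Gk_right_action_free_orbits (k : ℕ) (hk : 2 ≤ k) :
    (∀ E ∈ wSSets k, ∀ x : Gk k, (· * x) '' E = E → x = 1) ∧
    ∃ T : Set (Set (Gk k)), T ⊆ wSSets k ∧ T.ncard = k - 1 ∧
      (∀ E ∈ wSSets k, ∃ F ∈ T, ∃ x : Gk k, E = (· * x) '' F) ∧
      (∀ F₁ ∈ T, ∀ F₂ ∈ T, (∃ x : Gk k, F₂ = (· * x) '' F₁) → F₁ = F₂) := by
  constructor
  · -- freeness
    rintro E ⟨a, b, hWS⟩ x hEx
    have h1 : IsWS k ((· * x) '' E) (a * x) (b * x) := ws_translate hWS x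
    rw [hEx] at h1
    have h2 := (ws_data_unique hWS h1).1
    have : a * 1 = a * x := by rw [mul_one, ← h2]
    exact (mul_left_cancel this).symm
  · refine ⟨(fun j => EE k j) '' (Set.Icc 1 (k - 1)), ?_, ?_, ?_, ?_⟩
    · rintro F ⟨j, hj, rfl⟩
      rw [Set.mem_Icc] at hj
      exact ⟨aa k j, 1, ws_EE hk hj.1 (by omega)⟩
    · have hinj : Set.InjOn (fun j => EE k j) (Set.Icc 1 (k - 1)) := by
        intro i hi j hj hij
        rw [Set.mem_Icc] at hi hj
        exact EE_inj hk hi.1 (by omega) hj.1 (by omega) hij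
      rw [Set.ncard_image_of_injOn hinj, ← Finset.coe_Icc, Set.ncard_coe_finset, Nat.card_Icc]
      omega
    · rintro E ⟨a, b, hWS⟩
      obtain ⟨j, hj1, hj2, hja⟩ := ws_invariant hk hWS
      refine ⟨EE k j, ⟨j, Set.mem_Icc.mpr ⟨hj1, by omega⟩, rfl⟩, b, ?_⟩
      have h1 : IsWS k ((· * b) '' EE k j) (aa k j * b) (1 * b) :=
        ws_translate (ws_EE hk hj1 hj2) b
      rw [one_mul] at h1
      have h2 : aa k j * b = a := by rw [aa, hja]
      rw [h2] at h1
      exact ws_ext hWS h1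
    · rintro F₁ ⟨i, hi, rfl⟩ F₂ ⟨j, hj, rfl⟩ ⟨x, hx⟩
      rw [Set.mem_Icc] at hi hj
      have h1 : IsWS k ((· * x) '' EE k i) (aa k i * x) (1 * x) :=
        ws_translate (ws_EE hk hi.1 (by omega)) x
      rw [← hx, one_mul] at h1
      have h2 := (ws_data_unique (ws_EE hk hj.1 (by omega)) h1).2
      rw [← h2] at hx
      rw [hx]
      ext v
      rw [mem_image_mul_right]
      simp
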